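/- (Dyadic counting lemma for the greedy algorithm) Let d ≥ 2, δ > 0, V > 0, S ≥ 0 and let (T^i)_{i=0}^{N−1} be pairwise distinct measurable subsets of a region U with |U| = V, each satisfying δ ≤ |T^i|^{1/d}·a_i where ∑ over T^i in the dyadic class B_j := {i : 2^{-(j+1)}V < |T^i| ≤ 2^{-j}V} of a_i² is at most S². Then N ≤ ∑_{j≥0} min( 2^{-2j/d} δ^{-2} V^{2/d} S², 2^{j+1} ), and consequently N ≲ (δ^{-1} V^{1/d} S)^{2d/(2+d)}. -/

import Mathlib

open scoped Classical

lemma aux_summable (r A : ℝ) (hr0 : 0 ≤ r) (hr1 : r < 1) (hA : 0 ≤ A) :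
    Summable (fun j : ℕ => min (r ^ j * A) ((2:ℝ) ^ ((j:ℝ) + 1))) := by
  apply Summable.of_nonneg_of_le
    (fun j => le_min (by positivity) (by positivity))
    (fun j => min_le_left _ _)
  exact (summable_geometric_of_lt_one hr0 hr1).mul_right A

lemma aux_tsum (d : ℕ) (hd : 2 ≤ d) (A : ℝ) (hA : 0 ≤ A) :
    (∑' j : ℕ, min (((2:ℝ) ^ (-(2/(d:ℝ)))) ^ j * A) ((2:ℝ) ^ ((j:ℝ) + 1)))
      ≤ (4 + (1 - (2:ℝ) ^ (-(2/(d:ℝ))))⁻¹) * A ^ ((d:ℝ)/(2 + d)) := by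
  have hd0 : (0:ℝ) < d := by positivity
  set r : ℝ := (2:ℝ) ^ (-(2/(d:ℝ))) with hr
  have hr0 : 0 < r := Real.rpow_pos_of_pos two_pos _
  have hr1 : r < 1 :=
    Real.rpow_lt_one_of_one_lt_of_neg one_lt_two (by
      have : (0:ℝ) < 2/(d:ℝ) := by positivity
      linarith)
  have hsum := aux_summable r A hr0.le hr1 hA
  have hG : 0 < (1 - r)⁻¹ := by
    have : 0 < 1 - r := by linarith
    positivity
  set p : ℝ := (d:ℝ)/(2 + d) with hp
  have hp0 : 0 < p := by positivity
  have hp1 : p ≤ 1 := by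
    rw [hp, div_le_one (by positivity)]; linarith
  rcases eq_or_lt_of_le hA with hA0 | hA0
  · -- A = 0
    simp only [← hA0, mul_zero]
    rw [Real.zero_rpow hp0.ne', mul_zero]
    have : ∀ j : ℕ, min (0:ℝ) ((2:ℝ) ^ ((j:ℝ) + 1)) = 0 := fun j =>
      min_eq_left (by positivity)
    simp [this]
  rcases le_or_gt A 1 with hA1 | hA1
  · -- small A
    have h1 : (∑' j : ℕ, min (r ^ j * A) ((2:ℝ) ^ ((j:ℝ) + 1)))
        ≤ ∑' j : ℕ, r ^ j * A := by
      refine Summable.tsum_le_tsum (fun j => min_le_left _ _) hsum ?_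
      exact (summable_geometric_of_lt_one hr0.le hr1).mul_right A
    have h2 : (∑' j : ℕ, r ^ j * A) = (1 - r)⁻¹ * A := by
      rw [tsum_mul_right, tsum_geometric_of_lt_one hr0.le hr1]
    have h3 : A ≤ A ^ p := by
      calc A = A ^ (1:ℝ) := (Real.rpow_one A).symm
      _ ≤ A ^ p := Real.rpow_le_rpow_of_exponent_ge hA0 hA1 hp1
    calc (∑' j : ℕ, min (r ^ j * A) ((2:ℝ) ^ ((j:ℝ) + 1))) ≤ (1 - r)⁻¹ * A := by
          rw [← h2]; exact h1
    _ ≤ (4 + (1 - r)⁻¹) * A ^ p := by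
        apply mul_le_mul (by linarith) h3 hA0.le (by linarith)
  · -- large A
    set x : ℝ := Real.logb 2 A * p with hx
    have hlogb : 0 ≤ Real.logb 2 A := Real.logb_nonneg one_lt_two hA1.le
    have hx0 : 0 ≤ x := by positivity
    set j0 : ℕ := ⌈x⌉₊ with hj0
    have h2x : (2:ℝ) ^ x = A ^ p := by
      rw [hx, Real.rpow_mul (by norm_num : (0:ℝ) ≤ 2),
        Real.rpow_logb two_pos (by norm_num) hA0]
    have hsplit := Summable.sum_add_tsum_nat_add j0 hsum
    rw [← hsplit]
    have piece1 : (∑ i ∈ Finset.range j0, min (r ^ i * A) ((2:ℝ) ^ ((i:ℝ) + 1)))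
        ≤ 4 * A ^ p := by
      have step1 : (∑ i ∈ Finset.range j0, min (r ^ i * A) ((2:ℝ) ^ ((i:ℝ) + 1)))
          ≤ ∑ i ∈ Finset.range j0, 2 * (2:ℝ) ^ i := by
        apply Finset.sum_le_sum
        intro i _
        refine (min_le_right _ _).trans_eq ?_
        rw [Real.rpow_add two_pos, Real.rpow_one, Real.rpow_natCast]
        ring
      have step2 : (∑ i ∈ Finset.range j0, 2 * (2:ℝ) ^ i) = 2 * ((2:ℝ) ^ j0 - 1) := by
        rw [← Finset.mul_sum, geom_sum_eq (by norm_num : (2:ℝ) ≠ 1)]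
        norm_num
      have step3 : (2:ℝ) ^ j0 ≤ 2 * A ^ p := by
        have hjx : (j0:ℝ) ≤ x + 1 := (Nat.ceil_lt_add_one hx0).le
        calc (2:ℝ) ^ j0 = (2:ℝ) ^ ((j0:ℝ)) := (Real.rpow_natCast 2 j0).symm
        _ ≤ (2:ℝ) ^ (x + 1) := Real.rpow_le_rpow_of_exponent_le one_le_two hjx
        _ = 2 * A ^ p := by rw [Real.rpow_add two_pos, Real.rpow_one, h2x]; ring
      calc (∑ i ∈ Finset.range j0, min (r ^ i * A) ((2:ℝ) ^ ((i:ℝ) + 1)))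
          ≤ 2 * ((2:ℝ) ^ j0 - 1) := step1.trans_eq step2
      _ ≤ 4 * A ^ p := by nlinarith [Real.rpow_pos_of_pos hA0 p]
    have piece2 : (∑' i : ℕ, min (r ^ (i + j0) * A) ((2:ℝ) ^ ((↑(i + j0):ℝ) + 1)))
        ≤ (1 - r)⁻¹ * A ^ p := by
      have hb1 : (∑' i : ℕ, min (r ^ (i + j0) * A) ((2:ℝ) ^ ((↑(i + j0):ℝ) + 1)))
          ≤ ∑' i : ℕ, r ^ i * (r ^ j0 * A) := by
        refine Summable.tsum_le_tsum (fun i => ?_) ?_ ?_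
        · refine (min_le_left _ _).trans_eq ?_
          rw [pow_add]; ring
        · exact (aux_summable r A hr0.le hr1 hA).comp_injective (add_left_injective j0)
        · exact (summable_geometric_of_lt_one hr0.le hr1).mul_right _
      have hb2 : (∑' i : ℕ, r ^ i * (r ^ j0 * A)) = (1 - r)⁻¹ * (r ^ j0 * A) := by
        rw [tsum_mul_right, tsum_geometric_of_lt_one hr0.le hr1]
      have hrj0 : r ^ j0 * A ≤ A ^ p := by
        have hxj : x ≤ (j0:ℝ) := Nat.le_ceil x
        have e1 : r ^ j0 = (2:ℝ) ^ (-(2/(d:ℝ)) * j0) := by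
          rw [Real.rpow_mul (by norm_num : (0:ℝ) ≤ 2), Real.rpow_natCast]
        have e2 : (2:ℝ) ^ (-(2/(d:ℝ)) * (j0:ℝ)) ≤ (2:ℝ) ^ (-(2/(d:ℝ)) * x) := by
          apply Real.rpow_le_rpow_of_exponent_le one_le_two
          apply mul_le_mul_of_nonpos_left hxj
          have : (0:ℝ) < 2/(d:ℝ) := by positivity
          linarith
        have e3 : (2:ℝ) ^ (-(2/(d:ℝ)) * x) = A ^ (-(2/(2 + (d:ℝ)))) := by
          rw [hx]
          have : -(2/(d:ℝ)) * (Real.logb 2 A * p) = Real.logb 2 A * (-(2/(2 + (d:ℝ)))) := by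
            rw [hp]; field_simp
          rw [this, Real.rpow_mul (by norm_num : (0:ℝ) ≤ 2),
            Real.rpow_logb two_pos (by norm_num) hA0]
        have e4 : A ^ (-(2/(2 + (d:ℝ)))) * A = A ^ p := by
          nth_rewrite 2 [← Real.rpow_one A]
          rw [← Real.rpow_add hA0, hp]
          congr 1
          field_simp; ring
        calc r ^ j0 * A ≤ A ^ (-(2/(2 + (d:ℝ)))) * A := by
              apply mul_le_mul_of_nonneg_right _ hA
              rw [e1]; exact e2.trans_eq e3
        _ = A ^ p := e4
      calc (∑' i : ℕ, min (r ^ (i + j0) * A) ((2:ℝ) ^ ((↑(i + j0):ℝ) + 1)))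
          ≤ (1 - r)⁻¹ * (r ^ j0 * A) := hb1.trans_eq hb2
      _ ≤ (1 - r)⁻¹ * A ^ p := by
          apply mul_le_mul_of_nonneg_left hrj0 hG.le
    calc (∑ i ∈ Finset.range j0, min (r ^ i * A) ((2:ℝ) ^ ((i:ℝ) + 1)))
          + (∑' i : ℕ, min (r ^ (i + j0) * A) ((2:ℝ) ^ ((↑(i + j0):ℝ) + 1)))
        ≤ 4 * A ^ p + (1 - r)⁻¹ * A ^ p := add_le_add piece1 piece2
    _ = (4 + (1 - r)⁻¹) * A ^ p := by ring

open scoped Classical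

/-- dyadic counting lemma for the greedy algorithm:
pairwise distinct cells `T^i ⊆ U` with measures `m i`, classified dyadically by
`B_j = {i : 2^{-(j+1)}V < m i ≤ 2^{-j}V}`, satisfying `δ ≤ (m i)^{1/d} a i`,
`∑_{i ∈ B_j} (a i)² ≤ S²` and (by disjointness) `∑_{i ∈ B_j} m i ≤ V`, obey
`N ≤ ∑_j min(2^{-2j/d} δ^{-2} V^{2/d} S², 2^{j+1})` and consequently
`N ≲ (δ⁻¹ V^{1/d} S)^{2d/(2+d)}` with a constant depending only on `d`. -/
theorem greedy_dyadic_counting (d : ℕ) (hd : 2 ≤ d) :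
    ∃ C : ℝ, 0 < C ∧
    ∀ (N : ℕ) (V δ S : ℝ) (m a : Fin N → ℝ),
      0 < V → 0 < δ → 0 ≤ S →
      (∀ i, 0 < m i ∧ m i ≤ V) →
      (∀ i, 0 ≤ a i) →
      (∀ i, δ ≤ m i ^ ((1 : ℝ) / d) * a i) →
      (∀ j : ℕ, ∑ i ∈ Finset.univ.filter
          (fun i => 2 ^ (-(j : ℝ) - 1) * V < m i ∧ m i ≤ 2 ^ (-(j : ℝ)) * V),
          (a i) ^ 2 ≤ S ^ 2) →
      (∀ j : ℕ, ∑ i ∈ Finset.univ.filter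
          (fun i => 2 ^ (-(j : ℝ) - 1) * V < m i ∧ m i ≤ 2 ^ (-(j : ℝ)) * V),
          m i ≤ V) →
      (N : ℝ) ≤ (∑' j : ℕ,
          min (2 ^ (-(2 * (j : ℝ)) / d) * δ⁻¹ ^ 2 * V ^ ((2 : ℝ) / d) * S ^ 2)
            (2 ^ ((j : ℝ) + 1))) ∧
      (N : ℝ) ≤ C * (δ⁻¹ * V ^ ((1 : ℝ) / d) * S) ^ ((2 * d : ℝ) / (2 + d)) := by
  have hd0 : (0:ℝ) < d := by positivity
  set r : ℝ := (2:ℝ) ^ (-(2/(d:ℝ))) with hr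
  have hr0 : 0 < r := Real.rpow_pos_of_pos two_pos _
  have hr1 : r < 1 := Real.rpow_lt_one_of_one_lt_of_neg one_lt_two (by
    have : (0:ℝ) < 2/(d:ℝ) := by positivity
    linarith)
  have hC : 0 < 4 + (1 - r)⁻¹ := by
    have : 0 < 1 - r := by linarith
    positivity
  refine ⟨4 + (1 - r)⁻¹, hC, ?_⟩
  intro N V δ S m a hV hδ hS hm ha hδa hB hBm
  -- the target A and pointwise form of the min
  set A : ℝ := δ⁻¹ ^ 2 * V ^ ((2:ℝ)/d) * S ^ 2 with hA
  have hA0 : 0 ≤ A := by positivity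
  have hexp : ∀ j : ℕ, (2:ℝ) ^ (-(2 * (j:ℝ)) / d) = r ^ j := by
    intro j
    rw [← Real.rpow_natCast r j, hr, ← Real.rpow_mul (by norm_num : (0:ℝ) ≤ 2)]
    congr 1
    ring
  have hmineq : ∀ j : ℕ,
      min ((2:ℝ) ^ (-(2 * (j:ℝ)) / d) * δ⁻¹ ^ 2 * V ^ ((2:ℝ)/d) * S ^ 2)
        ((2:ℝ) ^ ((j:ℝ) + 1)) = min (r ^ j * A) ((2:ℝ) ^ ((j:ℝ) + 1)) := by
    intro j
    rw [hexp j, hA]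
    ring_nf
  have hsum : Summable (fun j : ℕ => min (r ^ j * A) ((2:ℝ) ^ ((j:ℝ) + 1))) :=
    aux_summable r A hr0.le hr1 hA0
  -- classification map
  set J : Fin N → ℕ := fun i => ⌊Real.logb 2 (V / m i)⌋₊ with hJ
  have key : ∀ (i : Fin N) (j : ℕ),
      ((2:ℝ) ^ (-(j:ℝ) - 1) * V < m i ∧ m i ≤ 2 ^ (-(j:ℝ)) * V) ↔ J i = j := by
    intro i j
    obtain ⟨hm0, hmV⟩ := hm i
    have ht0 : 0 < V / m i := by positivity
    have ht1 : 1 ≤ V / m i := (one_le_div hm0).mpr hmV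
    have hlog0 : 0 ≤ Real.logb 2 (V / m i) := Real.logb_nonneg one_lt_two ht1
    have h2j : (0:ℝ) < (2:ℝ) ^ (j:ℝ) := Real.rpow_pos_of_pos two_pos _
    have h2j1 : (0:ℝ) < (2:ℝ) ^ ((j:ℝ) + 1) := Real.rpow_pos_of_pos two_pos _
    have e1 : (2:ℝ) ^ (-(j:ℝ)) = ((2:ℝ) ^ (j:ℝ))⁻¹ := Real.rpow_neg (by norm_num) _
    have e2 : (2:ℝ) ^ (-(j:ℝ) - 1) = ((2:ℝ) ^ ((j:ℝ) + 1))⁻¹ := by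
      rw [show -(j:ℝ) - 1 = -((j:ℝ) + 1) by ring]
      exact Real.rpow_neg (by norm_num) _
    have step : ((2:ℝ) ^ (-(j:ℝ) - 1) * V < m i ∧ m i ≤ 2 ^ (-(j:ℝ)) * V) ↔
        ((2:ℝ) ^ (j:ℝ) ≤ V / m i ∧ V / m i < (2:ℝ) ^ ((j:ℝ) + 1)) := by
      rw [e1, e2]
      constructor
      · rintro ⟨h1, h2⟩
        constructor
        · rw [le_div_iff₀ hm0]
          calc (2:ℝ) ^ (j:ℝ) * m i ≤ (2:ℝ) ^ (j:ℝ) * (((2:ℝ) ^ (j:ℝ))⁻¹ * V) :=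
                mul_le_mul_of_nonneg_left h2 h2j.le
          _ = V := by field_simp
        · rw [div_lt_iff₀ hm0]
          calc V = (2:ℝ) ^ ((j:ℝ) + 1) * (((2:ℝ) ^ ((j:ℝ) + 1))⁻¹ * V) := by field_simp
          _ < (2:ℝ) ^ ((j:ℝ) + 1) * m i := mul_lt_mul_of_pos_left h1 h2j1
      · rintro ⟨h1, h2⟩
        rw [le_div_iff₀ hm0] at h1
        rw [div_lt_iff₀ hm0] at h2
        constructor
        · rw [inv_mul_eq_div, div_lt_iff₀ h2j1]
          linarith [h2]
        · rw [inv_mul_eq_div, le_div_iff₀ h2j]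
          linarith [h1]
    rw [step, hJ]
    simp only
    rw [Nat.floor_eq_iff hlog0]
    constructor
    · rintro ⟨h1, h2⟩
      exact ⟨(Real.le_logb_iff_rpow_le one_lt_two ht0).mpr h1,
        (Real.logb_lt_iff_lt_rpow one_lt_two ht0).mpr h2⟩
    · rintro ⟨h1, h2⟩
      exact ⟨(Real.le_logb_iff_rpow_le one_lt_two ht0).mp h1,
        (Real.logb_lt_iff_lt_rpow one_lt_two ht0).mp h2⟩
  -- notation for the dyadic classes
  set Bs : ℕ → Finset (Fin N) := fun j => Finset.univ.filter
      (fun i => 2 ^ (-(j:ℝ) - 1) * V < m i ∧ m i ≤ 2 ^ (-(j:ℝ)) * V) with hBs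
  -- counting by fibers
  have hfiber : ∀ j : ℕ, Finset.univ.filter (fun i => J i = j) = Bs j := by
    intro j
    ext i
    simp only [Finset.mem_filter, Finset.mem_univ, true_and, hBs]
    exact (key i j).symm
  have hcard : (N : ℝ) = ∑ j ∈ Finset.univ.image J, ((Bs j).card : ℝ) := by
    have h1 : (Finset.univ : Finset (Fin N)).card
        = ∑ j ∈ Finset.univ.image J, (Bs j).card := by
      rw [Finset.card_eq_sum_card_fiberwise
        (fun i _ => Finset.mem_image_of_mem J (Finset.mem_univ i))]
      exact Finset.sum_congr rfl fun j _ => by rw [hfiber j]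
    calc (N : ℝ) = ((Finset.univ : Finset (Fin N)).card : ℝ) := by simp
    _ = ∑ j ∈ Finset.univ.image J, ((Bs j).card : ℝ) := by rw [h1]; push_cast; rfl
  -- the per-class bounds
  have hclass : ∀ j : ℕ, ((Bs j).card : ℝ) ≤ min (r ^ j * A) ((2:ℝ) ^ ((j:ℝ) + 1)) := by
    intro j
    have h2j1 : (0:ℝ) < (2:ℝ) ^ ((j:ℝ) + 1) := Real.rpow_pos_of_pos two_pos _
    have hW : (0:ℝ) < (2:ℝ) ^ (-(j:ℝ)) * V :=
      mul_pos (Real.rpow_pos_of_pos two_pos _) hV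
    set W : ℝ := (2:ℝ) ^ (-(j:ℝ)) * V with hWdef
    have hWp : (0:ℝ) < W ^ ((2:ℝ)/d) := Real.rpow_pos_of_pos hW _
    refine le_min ?_ ?_
    · -- first bound, via the a-sums
      have lb : ∀ i ∈ Bs j, δ ^ 2 / W ^ ((2:ℝ)/d) ≤ a i ^ 2 := by
        intro i hi
        rw [hBs, Finset.mem_filter] at hi
        obtain ⟨-, -, hm2⟩ := hi
        have hii := hδa i
        have hmi0 : (0:ℝ) ≤ m i := (hm i).1.le
        have hrpow : m i ^ ((1:ℝ)/d) ≤ W ^ ((1:ℝ)/d) :=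
          Real.rpow_le_rpow hmi0 hm2 (by positivity)
        have hW1 : (0:ℝ) < W ^ ((1:ℝ)/d) := Real.rpow_pos_of_pos hW _
        have haδ : δ / W ^ ((1:ℝ)/d) ≤ a i := by
          rw [div_le_iff₀ hW1]
          calc δ ≤ m i ^ ((1:ℝ)/d) * a i := hii
          _ ≤ W ^ ((1:ℝ)/d) * a i := mul_le_mul_of_nonneg_right hrpow (ha i)
          _ = a i * W ^ ((1:ℝ)/d) := by ring
        have hsq : (δ / W ^ ((1:ℝ)/d)) ^ 2 ≤ a i ^ 2 :=
          pow_le_pow_left₀ (by positivity) haδ 2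
        have heq : (δ / W ^ ((1:ℝ)/d)) ^ 2 = δ ^ 2 / W ^ ((2:ℝ)/d) := by
          rw [div_pow]
          congr 1
          rw [← Real.rpow_natCast (W ^ ((1:ℝ)/d)) 2, ← Real.rpow_mul hW.le]
          congr 1
          push_cast; ring
        rw [← heq]; exact hsq
      have hsum1 : ((Bs j).card : ℝ) * (δ ^ 2 / W ^ ((2:ℝ)/d)) ≤ S ^ 2 := by
        calc ((Bs j).card : ℝ) * (δ ^ 2 / W ^ ((2:ℝ)/d))
            = (Bs j).card • (δ ^ 2 / W ^ ((2:ℝ)/d)) := by rw [nsmul_eq_mul]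
        _ ≤ ∑ i ∈ Bs j, a i ^ 2 := Finset.card_nsmul_le_sum _ _ _ lb
        _ ≤ S ^ 2 := hB j
      have hrearr : ((Bs j).card : ℝ)
          = (((Bs j).card : ℝ) * (δ ^ 2 / W ^ ((2:ℝ)/d))) * (W ^ ((2:ℝ)/d) * δ⁻¹ ^ 2) := by
        field_simp
      have hfinal : ((Bs j).card : ℝ) ≤ S ^ 2 * (W ^ ((2:ℝ)/d) * δ⁻¹ ^ 2) := by
        rw [hrearr]
        exact mul_le_mul_of_nonneg_right hsum1 (by positivity)
      refine hfinal.trans_eq ?_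
      have hWsplit : W ^ ((2:ℝ)/d) = r ^ j * V ^ ((2:ℝ)/d) := by
        rw [hWdef, Real.mul_rpow (by positivity) hV.le, ← hexp j,
          ← Real.rpow_mul (by norm_num : (0:ℝ) ≤ 2)]
        congr 2
        ring
      rw [hWsplit, hA]
      ring
    · -- second bound, via the measure sums
      have lb : ∀ i ∈ Bs j, ((2:ℝ) ^ ((j:ℝ) + 1))⁻¹ * V ≤ m i := by
        intro i hi
        rw [hBs, Finset.mem_filter] at hi
        obtain ⟨-, h1, -⟩ := hi
        refine le_of_lt ?_
        calc ((2:ℝ) ^ ((j:ℝ) + 1))⁻¹ * V = (2:ℝ) ^ (-(j:ℝ) - 1) * V := by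
              rw [show -(j:ℝ) - 1 = -((j:ℝ) + 1) by ring, Real.rpow_neg (by norm_num)]
        _ < m i := h1
      have hsum2 : ((Bs j).card : ℝ) * (((2:ℝ) ^ ((j:ℝ) + 1))⁻¹ * V) ≤ V := by
        calc ((Bs j).card : ℝ) * (((2:ℝ) ^ ((j:ℝ) + 1))⁻¹ * V)
            = (Bs j).card • (((2:ℝ) ^ ((j:ℝ) + 1))⁻¹ * V) := by rw [nsmul_eq_mul]
        _ ≤ ∑ i ∈ Bs j, m i := Finset.card_nsmul_le_sum _ _ _ lb
        _ ≤ V := hBm j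
      have h1 : ((Bs j).card : ℝ) * ((2:ℝ) ^ ((j:ℝ) + 1))⁻¹ ≤ 1 := by
        rw [show ((Bs j).card : ℝ) * (((2:ℝ) ^ ((j:ℝ) + 1))⁻¹ * V)
            = (((Bs j).card : ℝ) * ((2:ℝ) ^ ((j:ℝ) + 1))⁻¹) * V by ring] at hsum2
        nlinarith
      calc ((Bs j).card : ℝ)
          = (((Bs j).card : ℝ) * ((2:ℝ) ^ ((j:ℝ) + 1))⁻¹) * (2:ℝ) ^ ((j:ℝ) + 1) := by
            field_simp
      _ ≤ 1 * (2:ℝ) ^ ((j:ℝ) + 1) := mul_le_mul_of_nonneg_right h1 h2j1.le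
      _ = (2:ℝ) ^ ((j:ℝ) + 1) := one_mul _
  -- part 1
  have part1 : (N : ℝ) ≤ ∑' j : ℕ, min (r ^ j * A) ((2:ℝ) ^ ((j:ℝ) + 1)) := by
    rw [hcard]
    calc (∑ j ∈ Finset.univ.image J, ((Bs j).card : ℝ))
        ≤ ∑ j ∈ Finset.univ.image J, min (r ^ j * A) ((2:ℝ) ^ ((j:ℝ) + 1)) :=
          Finset.sum_le_sum fun j _ => hclass j
    _ ≤ ∑' j : ℕ, min (r ^ j * A) ((2:ℝ) ^ ((j:ℝ) + 1)) :=
          Summable.sum_le_tsum _ (fun j _ => le_min (by positivity) (by positivity)) hsum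
  constructor
  · refine part1.trans_eq ?_
    exact (tsum_congr fun j => (hmineq j)).symm
  · refine part1.trans ((aux_tsum d hd A hA0).trans_eq ?_)
    congr 1
    have hB0 : (0:ℝ) ≤ δ⁻¹ * V ^ ((1:ℝ)/d) * S := by positivity
    rw [show (2 * (d:ℝ)) / (2 + d) = 2 * ((d:ℝ)/(2 + d)) by ring,
      Real.rpow_mul hB0, Real.rpow_two]
    congr 1
    rw [hA]
    have hV2 : (V ^ ((1:ℝ)/d)) ^ (2:ℕ) = V ^ ((2:ℝ)/d) := by
      rw [← Real.rpow_natCast (V ^ ((1:ℝ)/d)) 2, ← Real.rpow_mul hV.le]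
      congr 1
      push_cast; ring
    rw [mul_pow, mul_pow, hV2]
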